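/- arXiv:2011.02826 — 6 statements merged into one kernel-verified Lean document; each statement's English description precedes it below -/
import Mathlib

section
/- Let n ≥ 1, let β₁, …, βₙ be positive integers, and let Δ be a positive integer with βᵢ ≤ Δ for every i. Then there exist integers x¹₁, x¹₂, x¹₃, …, xⁿ₁, xⁿ₂, xⁿ₃ satisfying 0 ≤ xⁱ₁ ≤ βᵢ, 0 ≤ xⁱ₂ ≤ Δ − βᵢ, 0 ≤ xⁱ₃ ≤ 1 and xⁱ₁ + xⁱ₂ + Δ·xⁱ₃ = Δ for every i ∈ {1, …, n}, together with ∑_{i=1}^n xⁱ₁ = Δ, if and only if there exists a subset S ⊆ {1, …, n} with ∑_{i∈S} βᵢ = Δ. -/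
/-- Correctness of the reduction from subset-sum to n-fold IP with
`A = (1,1,Δ)` and `D = (1,0,0)`. -/
theorem subset_sum_reduction_nfold
    (n : ℕ) (hn : 1 ≤ n) (β : Fin n → ℤ) (hβpos : ∀ i, 0 < β i)
    (Δ : ℤ) (hΔ : 0 < Δ) (hβΔ : ∀ i, β i ≤ Δ) :
    (∃ x1 x2 x3 : Fin n → ℤ,
      (∀ i, 0 ≤ x1 i ∧ x1 i ≤ β i) ∧
      (∀ i, 0 ≤ x2 i ∧ x2 i ≤ Δ - β i) ∧
      (∀ i, 0 ≤ x3 i ∧ x3 i ≤ 1) ∧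
      (∀ i, x1 i + x2 i + Δ * x3 i = Δ) ∧
      (∑ i, x1 i = Δ)) ↔
    ∃ S : Finset (Fin n), ∑ i ∈ S, β i = Δ := by
  constructor
  · rintro ⟨x1, x2, x3, h1, h2, h3, h4, h5⟩
    refine ⟨Finset.univ.filter (fun i => x3 i = 0), ?_⟩
    have key : ∀ i, (if x3 i = 0 then β i else 0) = x1 i := by
      intro i
      rcases eq_or_lt_of_le (h3 i).1 with h0 | h0
      · -- x3 i = 0
        rw [if_pos h0.symm]
        have hx : x1 i + x2 i = Δ := by
          have := h4 i; rw [← h0] at this; linarith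
        have := (h2 i).2
        have := (h1 i).2
        linarith
      · -- x3 i = 1
        have hx3 : x3 i = 1 := le_antisymm (h3 i).2 h0
        rw [if_neg (by rw [hx3]; norm_num)]
        have := h4 i
        rw [hx3] at this
        have := (h1 i).1
        have := (h2 i).1
        linarith
    rw [Finset.sum_filter]
    rw [Finset.sum_congr rfl (fun i _ => key i)]
    exact h5
  · rintro ⟨S, hS⟩
    refine ⟨fun i => if i ∈ S then β i else 0,
            fun i => if i ∈ S then Δ - β i else 0,
            fun i => if i ∈ S then 0 else 1, ?_, ?_, ?_, ?_, ?_⟩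
    · intro i; by_cases h : i ∈ S <;> simp [h, (hβpos i).le]
    · intro i; by_cases h : i ∈ S <;> simp [h]
      · linarith [hβΔ i]
      · linarith [hβpos i, hβΔ i]
    · intro i; by_cases h : i ∈ S <;> simp [h]
    · intro i; by_cases h : i ∈ S <;> simp [h]
    · rw [← hS, ← Finset.sum_filter]
      congr 1
      simp [Finset.filter_mem_eq_inter]
end

section
/- Let n ≥ 1, let β₁, …, βₙ be positive integers, and let Δ be a positive integer. Then there exist integers x¹₁, x¹₂, …, xⁿ₁, xⁿ₂ satisfying 0 ≤ xⁱ₁ ≤ 1, 0 ≤ xⁱ₂ ≤ Δ and Δ·xⁱ₁ + xⁱ₂ = Δ for every i ∈ {1, …, n}, together with ∑_{i=1}^n βᵢ·xⁱ₁ = Δ, if and only if there exists a subset S ⊆ {1, …, n} with ∑_{i∈S} βᵢ = Δ. -/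
/-- Correctness of the reduction from subset-sum to generalized n-fold IP
with diagonal blocks `A = (Δ, 1)` and top blocks `Dᵢ = (βᵢ, 0)`. -/
theorem subset_sum_reduction_generalized_nfold_A
    (n : ℕ) (hn : 1 ≤ n) (β : Fin n → ℤ) (hβpos : ∀ i, 0 < β i)
    (Δ : ℤ) (hΔ : 0 < Δ) :
    (∃ x1 x2 : Fin n → ℤ,
      (∀ i, 0 ≤ x1 i ∧ x1 i ≤ 1) ∧
      (∀ i, 0 ≤ x2 i ∧ x2 i ≤ Δ) ∧
      (∀ i, Δ * x1 i + x2 i = Δ) ∧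
      (∑ i, β i * x1 i = Δ)) ↔
    ∃ S : Finset (Fin n), ∑ i ∈ S, β i = Δ := by
  constructor
  · rintro ⟨x1, x2, h1, h2, h3, hsum⟩
    refine ⟨Finset.univ.filter (fun i => x1 i = 1), ?_⟩
    rw [Finset.sum_filter, ← hsum]
    apply Finset.sum_congr rfl
    intro i _
    obtain ⟨ha, hb⟩ := h1 i
    interval_cases x1 i <;> simp
  · rintro ⟨S, hS⟩
    refine ⟨fun i => if i ∈ S then 1 else 0, fun i => if i ∈ S then 0 else Δ,
      fun i => ?_, fun i => ?_, fun i => ?_, ?_⟩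
    · simp only; split <;> simp
    · simp only; split <;> simp [le_of_lt hΔ]
    · simp only; split <;> ring
    · simp only [mul_ite, mul_one, mul_zero, Finset.sum_ite_mem,
        Finset.univ_inter, hS]
end

section
/- Let n ≥ 1, let β₁, …, βₙ be positive integers, and let Δ be a positive integer. Then there exist integers x¹₁, x¹₂, …, xⁿ₁, xⁿ₂ satisfying 0 ≤ xⁱ₁ ≤ βᵢ, 0 ≤ xⁱ₂ ≤ 1 and xⁱ₁ + βᵢ·xⁱ₂ = βᵢ for every i ∈ {1, …, n}, together with ∑_{i=1}^n xⁱ₁ = Δ, if and only if there exists a subset S ⊆ {1, …, n} with ∑_{i∈S} βᵢ = Δ. -/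
/-- Correctness of the reduction from subset-sum to generalized n-fold IP
with top blocks `D = (1, 0)` and diagonal blocks `Aᵢ = (1, βᵢ)`. -/
theorem subset_sum_reduction_generalized_nfold_D
    (n : ℕ) (hn : 1 ≤ n) (β : Fin n → ℤ) (hβpos : ∀ i, 0 < β i)
    (Δ : ℤ) (hΔ : 0 < Δ) :
    (∃ x1 x2 : Fin n → ℤ,
      (∀ i, 0 ≤ x1 i ∧ x1 i ≤ β i) ∧
      (∀ i, 0 ≤ x2 i ∧ x2 i ≤ 1) ∧
      (∀ i, x1 i + β i * x2 i = β i) ∧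
      (∑ i, x1 i = Δ)) ↔
    ∃ S : Finset (Fin n), ∑ i ∈ S, β i = Δ := by
  constructor
  · rintro ⟨x1, x2, hx1, hx2, heq, hsum⟩
    refine ⟨Finset.univ.filter (fun i => x2 i = 0), ?_⟩
    have h0 : ∀ i ∈ Finset.univ.filter (fun i => ¬ x2 i = 0), x1 i = 0 := by
      intro i hi
      simp only [Finset.mem_filter] at hi
      have h1 : x2 i = 1 := by have := hx2 i; omega
      have := heq i
      rw [h1, mul_one] at this
      omega
    have h1 : ∑ i ∈ Finset.univ.filter (fun i => x2 i = 0), β i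
        = ∑ i ∈ Finset.univ.filter (fun i => x2 i = 0), x1 i := by
      refine Finset.sum_congr rfl fun i hi => ?_
      simp only [Finset.mem_filter] at hi
      have := heq i
      rw [hi.2, mul_zero] at this
      omega
    rw [h1, ← hsum,
      ← Finset.sum_filter_add_sum_filter_not Finset.univ (fun i => x2 i = 0) x1,
      Finset.sum_congr rfl h0, Finset.sum_const_zero, add_zero]
  · rintro ⟨S, hS⟩
    refine ⟨fun i => if i ∈ S then β i else 0, fun i => if i ∈ S then 0 else 1,
      fun i => ?_, fun i => ?_, fun i => ?_, ?_⟩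
    · by_cases h : i ∈ S <;> simp [h] <;> exact (hβpos i).le
    · by_cases h : i ∈ S <;> simp [h]
    · by_cases h : i ∈ S <;> simp [h]
    · rw [← hS, Finset.sum_ite_mem, Finset.univ_inter]
end

section
/- Let s_C, t_B, t_A ≥ 1 and n ≥ 1, let C ∈ ℤ^{s_C×t_B}, D ∈ ℤ^{s_C×t_A}, B ∈ ℤ^{1×t_B}, let b⁰ ∈ ℤ^{s_C}, b¹, …, bⁿ ∈ ℤ, let l⁰, u⁰ ∈ ℤ^{t_B}, lⁱ, uⁱ ∈ ℤ^{t_A} for 1 ≤ i ≤ n, and let w⁰ ∈ ℝ^{t_B}, wⁱ ∈ ℝ^{t_A} for 1 ≤ i ≤ n. Suppose x⁰ ∈ ℤ^{t_B}, y ∈ ℤ^{t_A} and x¹, …, xⁿ ∈ ℝ^{t_A} satisfy: ∑_{i=1}^n xⁱ = y; C·x⁰ + D·y = b⁰; B·x⁰ + ∑_{j=1}^{t_A} xⁱⱼ = bⁱ for every i; l⁰ ≤ x⁰ ≤ u⁰; and lⁱ ≤ xⁱ ≤ uⁱ for every i. Then there exist x̄¹, …, x̄ⁿ ∈ ℤ^{t_A}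 such that (x⁰, x̄¹, …, x̄ⁿ) satisfies all the above constraints (with ∑_{i=1}^n x̄ⁱ = y) and w⁰·x⁰ + ∑_{i=1}^n wⁱ·x̄ⁱ ≥ w⁰·x⁰ + ∑_{i=1}^n wⁱ·xⁱ. Consequently, the supremum of the objective over integer feasible solutions of the 4-block n-fold integer program with A = (1, …, 1) equals the supremum over such mixed feasible solutions. -/
open Finset

lemma exists_circulation {ι κ : Type} [Fintype ι] [Fintype κ] [DecidableEq ι] [DecidableEq κ]
    (F : Finset (ι × κ)) (hF : F.Nonempty)
    (hRC : (F.image Prod.fst).card + (F.image Prod.snd).card ≤ F.card) :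
    ∃ d : ι × κ → ℝ, d ≠ 0 ∧ (∀ p, p ∉ F → d p = 0) ∧
      (∀ i, ∑ j, d (i, j) = 0) ∧ (∀ j, ∑ i, d (i, j) = 0) := by
  classical
  set R := F.image Prod.fst with hR
  set Cs := F.image Prod.snd with hCs
  -- the linear map sending z : F → ℝ to (row sums, column sums)
  set L : (↥F → ℝ) →ₗ[ℝ] ((↥R → ℝ) × (↥Cs → ℝ)) :=
    LinearMap.prod
      (LinearMap.pi fun i : ↥R => ∑ p : ↥F,
        if (p : ι × κ).1 = (i : ι) then (LinearMap.proj p : (↥F → ℝ) →ₗ[ℝ] ℝ) else 0)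
      (LinearMap.pi fun j : ↥Cs => ∑ p : ↥F,
        if (p : ι × κ).2 = (j : κ) then (LinearMap.proj p : (↥F → ℝ) →ₗ[ℝ] ℝ) else 0) with hL
  have hL1 : ∀ (z : ↥F → ℝ) (i : ↥R),
      (L z).1 i = ∑ p : ↥F, if (p : ι × κ).1 = (i : ι) then z p else 0 := by
    intro z i
    simp [hL, LinearMap.pi_apply, LinearMap.sum_apply, apply_ite (fun f : (↥F → ℝ) →ₗ[ℝ] ℝ => f z)]
  have hL2 : ∀ (z : ↥F → ℝ) (j : ↥Cs),
      (L z).2 j = ∑ p : ↥F, if (p : ι × κ).2 = (j : κ) then z p else 0 := by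
    intro z j
    simp [hL, LinearMap.pi_apply, LinearMap.sum_apply, apply_ite (fun f : (↥F → ℝ) →ₗ[ℝ] ℝ => f z)]
  -- the functional ψ : sum of row coords minus sum of col coords
  set ψ : ((↥R → ℝ) × (↥Cs → ℝ)) →ₗ[ℝ] ℝ :=
    (∑ i : ↥R, (LinearMap.proj i).comp (LinearMap.fst ℝ (↥R → ℝ) (↥Cs → ℝ))) -
    (∑ j : ↥Cs, (LinearMap.proj j).comp (LinearMap.snd ℝ (↥R → ℝ) (↥Cs → ℝ))) with hψ
  have hψapp : ∀ rc : ((↥R → ℝ) × (↥Cs → ℝ)), ψ rc = (∑ i : ↥R, rc.1 i) - ∑ j : ↥Cs, rc.2 j := by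
    intro rc; simp [hψ, LinearMap.sum_apply]
  -- range L ⊆ ker ψ
  have hrange : LinearMap.range L ≤ LinearMap.ker ψ := by
    rintro _ ⟨z, rfl⟩
    rw [LinearMap.mem_ker, hψapp]
    have h1 : ∑ i : ↥R, (L z).1 i = ∑ p : ↥F, z p := by
      rw [Finset.sum_congr rfl fun i _ => hL1 z i, Finset.sum_comm]
      refine Finset.sum_congr rfl fun p _ => ?_
      rw [Finset.sum_coe_sort R (fun i => if (p : ι × κ).1 = i then z p else 0)]
      rw [Finset.sum_ite_eq R ((p : ι × κ).1) (fun _ => z p)]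
      have : (p : ι × κ).1 ∈ R := Finset.mem_image_of_mem Prod.fst p.2
      simp [this]
    have h2 : ∑ j : ↥Cs, (L z).2 j = ∑ p : ↥F, z p := by
      rw [Finset.sum_congr rfl fun j _ => hL2 z j, Finset.sum_comm]
      refine Finset.sum_congr rfl fun p _ => ?_
      rw [Finset.sum_coe_sort Cs (fun j => if (p : ι × κ).2 = j then z p else 0)]
      rw [Finset.sum_ite_eq Cs ((p : ι × κ).2) (fun _ => z p)]
      have : (p : ι × κ).2 ∈ Cs := Finset.mem_image_of_mem Prod.snd p.2
      simp [this]
    rw [h1, h2, sub_self]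
  -- ψ is nonzero, so its kernel has codimension 1
  have hRne : R.Nonempty := hF.image _
  have hψne : ψ ≠ 0 := by
    obtain ⟨i0, hi0⟩ := hRne
    intro h
    have := hψapp (Pi.single (⟨i0, hi0⟩ : ↥R) (1 : ℝ), 0)
    rw [h] at this
    simp [Finset.sum_pi_single'] at this
  have hcodim : Module.finrank ℝ ↥(LinearMap.ker ψ) + 1 = R.card + Cs.card := by
    have hrk : Module.finrank ℝ ↥(LinearMap.range ψ) = 1 := by
      have h1 : Module.finrank ℝ ↥(LinearMap.range ψ) ≤ 1 := by
        simpa using Submodule.finrank_le (LinearMap.range ψ)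
      have h2 : 0 < Module.finrank ℝ ↥(LinearMap.range ψ) := by
        rw [Module.finrank_pos_iff]
        rw [Submodule.nontrivial_iff_ne_bot, ne_eq, LinearMap.range_eq_bot]
        exact hψne
      omega
    have hdim : Module.finrank ℝ (((↥R → ℝ) × (↥Cs → ℝ))) = R.card + Cs.card := by
      rw [Module.finrank_prod, Module.finrank_pi, Module.finrank_pi, Fintype.card_coe,
        Fintype.card_coe]
    have := LinearMap.finrank_range_add_finrank_ker ψ
    rw [hrk, hdim] at this
    omega
  -- kernel of L is nontrivial
  have hker : LinearMap.ker L ≠ ⊥ := by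
    intro hbot
    have hinj : Function.Injective L := LinearMap.ker_eq_bot.mp hbot
    have h1 : Module.finrank ℝ (↥F → ℝ) = Module.finrank ℝ ↥(LinearMap.range L) :=
      (LinearMap.finrank_range_of_inj hinj).symm
    have h2 : Module.finrank ℝ ↥(LinearMap.range L) ≤ Module.finrank ℝ ↥(LinearMap.ker ψ) :=
      Submodule.finrank_mono hrange
    rw [Module.finrank_pi, Fintype.card_coe] at h1
    omega
  obtain ⟨z, hzker, hzne⟩ := Submodule.exists_mem_ne_zero_of_ne_bot hker
  refine ⟨fun p => if h : p ∈ F then z ⟨p, h⟩ else 0, ?_, ?_, ?_, ?_⟩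
  · intro h
    obtain ⟨q, hq⟩ := Function.ne_iff.mp hzne
    apply hq
    have := congrFun h (q : ι × κ)
    simpa [q.2] using this
  · intro p hp; simp [hp]
  · -- row sums
    intro i
    have key : ∑ j : κ, (if h : (i, j) ∈ F then z ⟨(i, j), h⟩ else 0)
        = ∑ p ∈ F.filter (fun p => p.1 = i), (if h : p ∈ F then z ⟨p, h⟩ else 0) := by
      rw [show (∑ p ∈ F.filter (fun p => p.1 = i), (if h : p ∈ F then z ⟨p, h⟩ else 0))
          = ∑ p ∈ (univ : Finset (ι × κ)).filter (fun p => p.1 = i),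
              (if h : p ∈ F then z ⟨p, h⟩ else 0) from ?_]
      · rw [Finset.sum_filter, Fintype.sum_prod_type]
        rw [show ∑ i' : ι, ∑ j : κ, (if i' = i then (if h : (i', j) ∈ F then z ⟨(i', j), h⟩ else 0) else 0)
            = ∑ i' : ι, (if i' = i then ∑ j : κ, (if h : (i', j) ∈ F then z ⟨(i', j), h⟩ else 0) else 0)
          from Finset.sum_congr rfl fun i' _ => by split <;> simp]
        rw [Finset.sum_ite_eq' univ i (fun i' => ∑ j : κ, (if h : (i', j) ∈ F then z ⟨(i', j), h⟩ else 0))]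
        simp
      · refine Finset.sum_subset (Finset.filter_subset_filter _ (Finset.subset_univ F)) ?_
        intro p hp hpF
        simp only [Finset.mem_filter] at hp hpF
        have : p ∉ F := fun h => hpF ⟨h, hp.2⟩
        simp [this]
    rw [key]
    by_cases hiR : i ∈ R
    · have key2 : ∑ p ∈ F.filter (fun p => p.1 = i), (if h : p ∈ F then z ⟨p, h⟩ else 0)
          = ∑ p : ↥F, if (p : ι × κ).1 = ((⟨i, hiR⟩ : ↥R) : ι) then z p else 0 := by
        rw [Finset.sum_filter,
          ← Finset.sum_coe_sort F (fun p => if p.1 = i then (if h : p ∈ F then z ⟨p, h⟩ else 0) else 0)]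
        exact Finset.sum_congr rfl fun p _ => by simp [p.2]
      rw [key2, ← hL1 z ⟨i, hiR⟩, LinearMap.mem_ker.mp hzker]
      rfl
    · rw [Finset.filter_false_of_mem, Finset.sum_empty]
      intro p hp
      intro hpi
      exact hiR (hpi ▸ Finset.mem_image_of_mem Prod.fst hp)
  · -- col sums
    intro j
    have key : ∑ i : ι, (if h : (i, j) ∈ F then z ⟨(i, j), h⟩ else 0)
        = ∑ p ∈ F.filter (fun p => p.2 = j), (if h : p ∈ F then z ⟨p, h⟩ else 0) := by
      rw [show (∑ p ∈ F.filter (fun p => p.2 = j), (if h : p ∈ F then z ⟨p, h⟩ else 0))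
          = ∑ p ∈ (univ : Finset (ι × κ)).filter (fun p => p.2 = j),
              (if h : p ∈ F then z ⟨p, h⟩ else 0) from ?_]
      · rw [Finset.sum_filter, Fintype.sum_prod_type_right]
        rw [show ∑ j' : κ, ∑ i : ι, (if j' = j then (if h : (i, j') ∈ F then z ⟨(i, j'), h⟩ else 0) else 0)
            = ∑ j' : κ, (if j' = j then ∑ i : ι, (if h : (i, j') ∈ F then z ⟨(i, j'), h⟩ else 0) else 0)
          from Finset.sum_congr rfl fun j' _ => by split <;> simp]
        rw [Finset.sum_ite_eq' univ j (fun j' => ∑ i : ι, (if h : (i, j') ∈ F then z ⟨(i, j'), h⟩ else 0))]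
        simp
      · refine Finset.sum_subset (Finset.filter_subset_filter _ (Finset.subset_univ F)) ?_
        intro p hp hpF
        simp only [Finset.mem_filter] at hp hpF
        have : p ∉ F := fun h => hpF ⟨h, hp.2⟩
        simp [this]
    rw [key]
    by_cases hjC : j ∈ Cs
    · have key2 : ∑ p ∈ F.filter (fun p => p.2 = j), (if h : p ∈ F then z ⟨p, h⟩ else 0)
          = ∑ p : ↥F, if (p : ι × κ).2 = ((⟨j, hjC⟩ : ↥Cs) : κ) then z p else 0 := by
        rw [Finset.sum_filter,
          ← Finset.sum_coe_sort F (fun p => if p.2 = j then (if h : p ∈ F then z ⟨p, h⟩ else 0) else 0)]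
        exact Finset.sum_congr rfl fun p _ => by simp [p.2]
      rw [key2, ← hL2 z ⟨j, hjC⟩, LinearMap.mem_ker.mp hzker]
      rfl
    · rw [Finset.filter_false_of_mem, Finset.sum_empty]
      intro p hp hpj
      exact hjC (hpj ▸ Finset.mem_image_of_mem Prod.snd hp)
lemma frac_lt_of_ne {r : ℝ} (h : Int.fract r ≠ 0) : ((⌊r⌋ : ℤ) : ℝ) < r ∧ r < ((⌈r⌉ : ℤ) : ℝ) := by
  have hne : ∀ z : ℤ, r ≠ (z : ℝ) := fun z hz => h (by rw [hz]; exact Int.fract_intCast z)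
  constructor
  · rcases lt_or_eq_of_le (Int.floor_le r) with h' | h'
    · exact h'
    · exact absurd h'.symm (hne ⌊r⌋)
  · rcases lt_or_eq_of_le (Int.le_ceil r) with h' | h'
    · exact h'
    · exact absurd h' (hne ⌈r⌉)

lemma rounding_lemma {ι κ : Type} [Fintype ι] [Fintype κ] [DecidableEq ι] [DecidableEq κ]
    (w : ι → κ → ℝ) (l u : ι → κ → ℤ) :
    ∀ (k : ℕ) (x : ι → κ → ℝ),
      (Finset.univ.filter (fun p : ι × κ => Int.fract (x p.1 p.2) ≠ 0)).card = k →
      (∀ i, ∃ m : ℤ, ∑ j, x i j = (m : ℝ)) →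
      (∀ j, ∃ m : ℤ, ∑ i, x i j = (m : ℝ)) →
      (∀ i j, (l i j : ℝ) ≤ x i j ∧ x i j ≤ (u i j : ℝ)) →
      ∃ xb : ι → κ → ℤ,
        (∀ i, (∑ j, (xb i j : ℝ)) = ∑ j, x i j) ∧
        (∀ j, (∑ i, (xb i j : ℝ)) = ∑ i, x i j) ∧
        (∀ i j, l i j ≤ xb i j ∧ xb i j ≤ u i j) ∧
        (∑ i, ∑ j, w i j * x i j) ≤ ∑ i, ∑ j, w i j * (xb i j : ℝ) := by
  intro k
  induction k using Nat.strong_induction_on with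
  | _ k IH =>
  intro x hcard hrow hcol hbox
  set F := Finset.univ.filter (fun p : ι × κ => Int.fract (x p.1 p.2) ≠ 0) with hF
  by_cases hFe : F = ∅
  · -- all entries integral
    have hint : ∀ i j, x i j = ((⌊x i j⌋ : ℤ) : ℝ) := by
      intro i j
      have h1 : (i, j) ∉ F := by rw [hFe]; exact notMem_empty _
      simp only [hF, mem_filter, mem_univ, true_and, not_not] at h1
      have := Int.floor_add_fract (x i j)
      rw [h1] at this
      linarith
    refine ⟨fun i j => ⌊x i j⌋, ?_, ?_, ?_, ?_⟩
    · intro i; exact Finset.sum_congr rfl fun j _ => (hint i j).symm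
    · intro j; exact Finset.sum_congr rfl fun i _ => (hint i j).symm
    · intro i j
      constructor
      · exact_mod_cast (hint i j ▸ (hbox i j).1 : (l i j : ℝ) ≤ ((⌊x i j⌋ : ℤ) : ℝ))
      · exact_mod_cast (hint i j ▸ (hbox i j).2 : ((⌊x i j⌋ : ℤ) : ℝ) ≤ (u i j : ℝ))
    · refine le_of_eq (Finset.sum_congr rfl fun i _ => Finset.sum_congr rfl fun j _ => ?_)
      rw [← hint i j]
  · -- there are fractional entries
    have hFne : F.Nonempty := Finset.nonempty_of_ne_empty hFe
    have hmemF : ∀ p : ι × κ, p ∈ F ↔ Int.fract (x p.1 p.2) ≠ 0 := by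
      intro p; simp [hF]
    -- every fractional row has at least 2 fractional entries
    have hrow2 : ∀ i ∈ F.image Prod.fst, 2 ≤ (F.filter (fun p => p.1 = i)).card := by
      intro i hi
      obtain ⟨p, hpF, hp1⟩ := Finset.mem_image.mp hi
      refine Finset.one_lt_card.mpr ?_
      by_contra hcon
      push_neg at hcon
      have huniq : ∀ q ∈ F.filter (fun q => q.1 = i), q = p := by
        intro q hq
        exact hcon q hq p (Finset.mem_filter.mpr ⟨hpF, hp1⟩)
      have hothers : ∀ j, j ≠ p.2 → x i j = ((⌊x i j⌋ : ℤ) : ℝ) := by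
        intro j hj
        have hfr : Int.fract (x i j) = 0 := by
          by_contra hfr
          have : (i, j) ∈ F.filter (fun q => q.1 = i) :=
            Finset.mem_filter.mpr ⟨(hmemF (i, j)).mpr hfr, rfl⟩
          exact hj (congrArg Prod.snd (huniq _ this))
        have := Int.floor_add_fract (x i j)
        rw [hfr] at this
        linarith
      obtain ⟨m, hm⟩ := hrow i
      have hsum : x i p.2 = (m : ℝ) - ∑ j ∈ univ.erase p.2, x i j := by
        rw [← Finset.add_sum_erase univ (fun j => x i j) (mem_univ p.2)] at hm
        linarith
      have hxi : x i p.2 = (((m - ∑ j ∈ univ.erase p.2, ⌊x i j⌋ : ℤ)) : ℝ) := by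
        rw [hsum]
        push_cast
        congr 1
        exact Finset.sum_congr rfl fun j hj => hothers j (Finset.ne_of_mem_erase hj)
      have hfr : Int.fract (x i p.2) = 0 := by rw [hxi]; exact Int.fract_intCast _
      have hmem : p ∈ F := hpF
      rw [hmemF] at hmem
      rw [← hp1] at hfr
      exact hmem hfr
    have hcol2 : ∀ j ∈ F.image Prod.snd, 2 ≤ (F.filter (fun p => p.2 = j)).card := by
      intro j hj
      obtain ⟨p, hpF, hp2⟩ := Finset.mem_image.mp hj
      refine Finset.one_lt_card.mpr ?_
      by_contra hcon
      push_neg at hcon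
      have huniq : ∀ q ∈ F.filter (fun q => q.2 = j), q = p := by
        intro q hq
        exact hcon q hq p (Finset.mem_filter.mpr ⟨hpF, hp2⟩)
      have hothers : ∀ i, i ≠ p.1 → x i j = ((⌊x i j⌋ : ℤ) : ℝ) := by
        intro i hi
        have hfr : Int.fract (x i j) = 0 := by
          by_contra hfr
          have : (i, j) ∈ F.filter (fun q => q.2 = j) :=
            Finset.mem_filter.mpr ⟨(hmemF (i, j)).mpr hfr, rfl⟩
          exact hi (congrArg Prod.fst (huniq _ this))
        have := Int.floor_add_fract (x i j)
        rw [hfr] at this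
        linarith
      obtain ⟨m, hm⟩ := hcol j
      have hsum : x p.1 j = (m : ℝ) - ∑ i ∈ univ.erase p.1, x i j := by
        rw [← Finset.add_sum_erase univ (fun i => x i j) (mem_univ p.1)] at hm
        linarith
      have hxj : x p.1 j = (((m - ∑ i ∈ univ.erase p.1, ⌊x i j⌋ : ℤ)) : ℝ) := by
        rw [hsum]
        push_cast
        congr 1
        exact Finset.sum_congr rfl fun i hi => hothers i (Finset.ne_of_mem_erase hi)
      have hfr : Int.fract (x p.1 j) = 0 := by rw [hxj]; exact Int.fract_intCast _
      have hmem : p ∈ F := hpF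
      rw [hmemF] at hmem
      rw [← hp2] at hfr
      exact hmem hfr
    -- counting
    have hcount : (F.image Prod.fst).card + (F.image Prod.snd).card ≤ F.card := by
      have h1 : 2 * (F.image Prod.fst).card ≤ F.card := by
        rw [Finset.card_eq_sum_card_fiberwise
          (fun p (hp : p ∈ F) => Finset.mem_image_of_mem Prod.fst hp)]
        calc 2 * (F.image Prod.fst).card = ∑ _i ∈ F.image Prod.fst, 2 := by
              rw [Finset.sum_const, smul_eq_mul, mul_comm]
          _ ≤ _ := Finset.sum_le_sum hrow2
      have h2 : 2 * (F.image Prod.snd).card ≤ F.card := by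
        rw [Finset.card_eq_sum_card_fiberwise
          (fun p (hp : p ∈ F) => Finset.mem_image_of_mem Prod.snd hp)]
        calc 2 * (F.image Prod.snd).card = ∑ _j ∈ F.image Prod.snd, 2 := by
              rw [Finset.sum_const, smul_eq_mul, mul_comm]
          _ ≤ _ := Finset.sum_le_sum hcol2
      omega
    obtain ⟨d, hd0, hdsupp, hdrow, hdcol⟩ := exists_circulation F hFne hcount
    -- choose direction of improvement
    set W : ℝ := ∑ i, ∑ j, w i j * d (i, j) with hW
    set e : ι × κ → ℝ := if 0 ≤ W then d else -d with he
    have hesupp : ∀ p, p ∉ F → e p = 0 := by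
      intro p hp; simp only [he]; split <;> simp [hdsupp p hp]
    have herow : ∀ i, ∑ j, e (i, j) = 0 := by
      intro i; simp only [he]; split
      · exact hdrow i
      · simp only [Pi.neg_apply, Finset.sum_neg_distrib]
        rw [hdrow i, neg_zero]
    have hecol : ∀ j, ∑ i, e (i, j) = 0 := by
      intro j; simp only [he]; split
      · exact hdcol j
      · simp only [Pi.neg_apply, Finset.sum_neg_distrib]
        rw [hdcol j, neg_zero]
    have heobj : 0 ≤ ∑ i, ∑ j, w i j * e (i, j) := by
      by_cases hWs : 0 ≤ W
      · simp only [he, if_pos hWs]; exact hWs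
      · simp only [he, if_neg hWs, Pi.neg_apply, mul_neg, Finset.sum_neg_distrib]
        have hlt : W < 0 := lt_of_not_ge hWs
        rw [hW] at hlt
        linarith
    have hene : e ≠ 0 := by
      simp only [he]; split
      · exact hd0
      · exact fun h => hd0 (by rw [← neg_neg d, h, neg_zero])
    -- the moving set
    set P : Finset (ι × κ) := Finset.univ.filter (fun p => e p ≠ 0) with hP
    have hPne : P.Nonempty := by
      obtain ⟨p, hp⟩ := Function.ne_iff.mp hene
      exact ⟨p, Finset.mem_filter.mpr ⟨mem_univ p, hp⟩⟩
    have hPF : P ⊆ F := by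
      intro p hp
      rw [Finset.mem_filter] at hp
      by_contra hpF
      exact hp.2 (hesupp p hpF)
    -- step sizes
    set t : ι × κ → ℝ := fun p =>
      (if 0 < e p then ((⌈x p.1 p.2⌉ : ℤ) : ℝ) - x p.1 p.2
        else x p.1 p.2 - ((⌊x p.1 p.2⌋ : ℤ) : ℝ)) / |e p| with ht
    set ε : ℝ := P.inf' hPne t with hε
    have hfrac : ∀ p ∈ P, ((⌊x p.1 p.2⌋ : ℤ) : ℝ) < x p.1 p.2 ∧ x p.1 p.2 < ((⌈x p.1 p.2⌉ : ℤ) : ℝ) := by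
      intro p hp
      have := hPF hp
      rw [hmemF] at this
      exact frac_lt_of_ne this
    have hεpos : 0 < ε := by
      rw [hε, Finset.lt_inf'_iff]
      intro p hp
      have hne : e p ≠ 0 := (Finset.mem_filter.mp hp).2
      have habs : 0 < |e p| := abs_pos.mpr hne
      apply div_pos _ habs
      obtain ⟨h1, h2⟩ := hfrac p hp
      split <;> linarith
    set x' : ι → κ → ℝ := fun i j => x i j + ε * e (i, j) with hx'
    -- movement bounds
    have hmove : ∀ p ∈ P,
        (0 < e p → x p.1 p.2 ≤ x' p.1 p.2 ∧ x' p.1 p.2 ≤ ((⌈x p.1 p.2⌉ : ℤ) : ℝ)) ∧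
        (e p < 0 → ((⌊x p.1 p.2⌋ : ℤ) : ℝ) ≤ x' p.1 p.2 ∧ x' p.1 p.2 ≤ x p.1 p.2) := by
      intro p hp
      have hle : ε ≤ t p := Finset.inf'_le t hp
      have hxp : x' p.1 p.2 = x p.1 p.2 + ε * e p := by
        simp only [hx', Prod.mk.eta]
      constructor
      · intro hpos
        have htp : t p = (((⌈x p.1 p.2⌉ : ℤ) : ℝ) - x p.1 p.2) / e p := by
          simp only [ht]
          rw [if_pos hpos, abs_of_pos hpos]
        rw [htp] at hle
        have hkey := (le_div_iff₀ hpos).mp hle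
        constructor
        · rw [hxp]; nlinarith
        · rw [hxp]; nlinarith
      · intro hneg
        have htp : t p = (x p.1 p.2 - ((⌊x p.1 p.2⌋ : ℤ) : ℝ)) / (-e p) := by
          simp only [ht]
          rw [if_neg (not_lt.mpr hneg.le), abs_of_neg hneg]
        rw [htp] at hle
        have hkey := (le_div_iff₀ (by linarith : (0:ℝ) < -e p)).mp hle
        constructor
        · rw [hxp]; nlinarith
        · rw [hxp]; nlinarith
    -- box preserved
    have hbox' : ∀ i j, (l i j : ℝ) ≤ x' i j ∧ x' i j ≤ (u i j : ℝ) := by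
      intro i j
      by_cases hpP : (i, j) ∈ P
      · rcases lt_trichotomy 0 (e (i, j)) with hpos | heq | hneg
        · obtain ⟨h1, h2⟩ := (hmove _ hpP).1 hpos
          have hceil : ((⌈x i j⌉ : ℤ) : ℝ) ≤ (u i j : ℝ) :=
            Int.cast_le.mpr (Int.ceil_le.mpr (hbox i j).2)
          exact ⟨le_trans (hbox i j).1 h1, le_trans h2 hceil⟩
        · exact absurd heq.symm (Finset.mem_filter.mp hpP).2
        · obtain ⟨h1, h2⟩ := (hmove _ hpP).2 hneg
          have hfl : (l i j : ℝ) ≤ ((⌊x i j⌋ : ℤ) : ℝ) :=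
            Int.cast_le.mpr (Int.le_floor.mpr (hbox i j).1)
          exact ⟨le_trans hfl h1, le_trans h2 (hbox i j).2⟩
      · have he0 : e (i, j) = 0 := by
          by_contra h
          exact hpP (Finset.mem_filter.mpr ⟨mem_univ _, h⟩)
        simp only [hx', he0, mul_zero, add_zero]
        exact hbox i j
    -- sums preserved
    have hrowpres : ∀ i, ∑ j, x' i j = ∑ j, x i j := by
      intro i
      simp only [hx']
      rw [Finset.sum_add_distrib, ← Finset.mul_sum, herow i, mul_zero, add_zero]
    have hcolpres : ∀ j, ∑ i, x' i j = ∑ i, x i j := by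
      intro j
      simp only [hx']
      rw [Finset.sum_add_distrib, ← Finset.mul_sum, hecol j, mul_zero, add_zero]
    -- objective does not decrease
    have hobj' : ∑ i, ∑ j, w i j * x i j ≤ ∑ i, ∑ j, w i j * x' i j := by
      have hstep : ∀ i, ∑ j, w i j * x' i j = ∑ j, w i j * x i j + ε * ∑ j, w i j * e (i, j) := by
        intro i
        rw [Finset.mul_sum, ← Finset.sum_add_distrib]
        refine Finset.sum_congr rfl fun j _ => ?_
        simp only [hx']; ring
      rw [Finset.sum_congr rfl fun i (_ : i ∈ univ) => hstep i, Finset.sum_add_distrib,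
        ← Finset.mul_sum]
      nlinarith [mul_nonneg hεpos.le heobj]
    -- new fractional set is strictly smaller
    set F' := Finset.univ.filter (fun p : ι × κ => Int.fract (x' p.1 p.2) ≠ 0) with hF'
    have hsubset : F' ⊆ F := by
      intro p hp
      rw [Finset.mem_filter] at hp
      by_contra hpF
      have he0 : e p = 0 := hesupp p hpF
      have hxx : x' p.1 p.2 = x p.1 p.2 := by
        simp only [hx', Prod.mk.eta, he0, mul_zero, add_zero]
      have hfr : Int.fract (x p.1 p.2) = 0 := by
        by_contra hh
        exact hpF ((hmemF p).mpr hh)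
      exact hp.2 (hxx ▸ hfr)
    obtain ⟨q, hqP, hqt⟩ := Finset.exists_mem_eq_inf' hPne t
    have hq_int : Int.fract (x' q.1 q.2) = 0 := by
      have hne : e q ≠ 0 := (Finset.mem_filter.mp hqP).2
      have hxq : x' q.1 q.2 = x q.1 q.2 + ε * e q := by
        simp only [hx', Prod.mk.eta]
      rcases hne.lt_or_gt with hneg | hpos
      · have htq : t q = (x q.1 q.2 - ((⌊x q.1 q.2⌋ : ℤ) : ℝ)) / (-e q) := by
          simp only [ht]
          rw [if_neg (not_lt.mpr hneg.le), abs_of_neg hneg]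
        have hεq : ε = (x q.1 q.2 - ((⌊x q.1 q.2⌋ : ℤ) : ℝ)) / (-e q) := by
          rw [hε, hqt, htq]
        have hmul : ε * e q = -(x q.1 q.2 - ((⌊x q.1 q.2⌋ : ℤ) : ℝ)) := by
          have h2 : ε * -e q = x q.1 q.2 - ((⌊x q.1 q.2⌋ : ℤ) : ℝ) := by
            rw [hεq]
            exact div_mul_cancel₀ _ (by linarith : -e q ≠ 0)
          linarith [h2]
        have : x' q.1 q.2 = ((⌊x q.1 q.2⌋ : ℤ) : ℝ) := by
          rw [hxq, hmul]; ring
        rw [this]; exact Int.fract_intCast _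
      · have htq : t q = (((⌈x q.1 q.2⌉ : ℤ) : ℝ) - x q.1 q.2) / e q := by
          simp only [ht]
          rw [if_pos hpos, abs_of_pos hpos]
        have hεq : ε = (((⌈x q.1 q.2⌉ : ℤ) : ℝ) - x q.1 q.2) / e q := by
          rw [hε, hqt, htq]
        have hmul : ε * e q = ((⌈x q.1 q.2⌉ : ℤ) : ℝ) - x q.1 q.2 := by
          rw [hεq]
          exact div_mul_cancel₀ _ hne
        have : x' q.1 q.2 = ((⌈x q.1 q.2⌉ : ℤ) : ℝ) := by
          rw [hxq, hmul]; ring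
        rw [this]; exact Int.fract_intCast _
    have hqF : q ∈ F := hPF hqP
    have hqF' : q ∉ F' := by
      rw [hF', Finset.mem_filter]
      exact fun hh => hh.2 hq_int
    have hstrict : F' ⊂ F := (Finset.ssubset_iff_of_subset hsubset).mpr ⟨q, hqF, hqF'⟩
    have hlt : F'.card < k := hcard ▸ Finset.card_lt_card hstrict
    have hrow' : ∀ i, ∃ m : ℤ, ∑ j, x' i j = (m : ℝ) :=
      fun i => (hrow i).imp fun m hm => by rw [hrowpres i]; exact hm
    have hcol' : ∀ j, ∃ m : ℤ, ∑ i, x' i j = (m : ℝ) :=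
      fun j => (hcol j).imp fun m hm => by rw [hcolpres j]; exact hm
    obtain ⟨xb, hb1, hb2, hb3, hb4⟩ := IH F'.card hlt x' rfl hrow' hcol' hbox'
    exact ⟨xb, fun i => by rw [hb1 i, hrowpres i],
      fun j => by rw [hb2 j, hcolpres j], hb3, le_trans hobj' hb4⟩

/-- For 4-block n-fold IP with `A = (1,…,1)`: any feasible solution of the
mixed relaxation MIP₂ (integral `x⁰`, `y`, real bricks `x¹,…,xⁿ`) can be
rounded to an integral solution with the same `x⁰`, `y` and no smaller
objective; consequently the suprema of the objective over integer feasible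
solutions and over mixed feasible solutions coincide. -/
theorem fourblock_ones_mip_rounding_and_sup
    (sC tB tA n : ℕ) (hsC : 1 ≤ sC) (htB : 1 ≤ tB) (htA : 1 ≤ tA) (hn : 1 ≤ n)
    (C : Matrix (Fin sC) (Fin tB) ℤ) (D : Matrix (Fin sC) (Fin tA) ℤ)
    (B : Fin tB → ℤ)
    (b0 : Fin sC → ℤ) (b : Fin n → ℤ)
    (l0 u0 : Fin tB → ℤ) (l u : Fin n → Fin tA → ℤ)
    (w0 : Fin tB → ℝ) (w : Fin n → Fin tA → ℝ)
    (x0 : Fin tB → ℤ) (y : Fin tA → ℤ) (x : Fin n → Fin tA → ℝ)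
    (hsum : ∀ j, ∑ i, x i j = (y j : ℝ))
    (hCD : C.mulVec x0 + D.mulVec y = b0)
    (hB : ∀ i, ((∑ j, B j * x0 j : ℤ) : ℝ) + ∑ j, x i j = (b i : ℝ))
    (hbox0 : ∀ j, l0 j ≤ x0 j ∧ x0 j ≤ u0 j)
    (hbox : ∀ i j, (l i j : ℝ) ≤ x i j ∧ x i j ≤ (u i j : ℝ)) :
    (∃ xbar : Fin n → Fin tA → ℤ,
      (∀ j, ∑ i, xbar i j = y j) ∧
      (C.mulVec x0 + D.mulVec (fun j => ∑ i, xbar i j) = b0) ∧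
      (∀ i, (∑ j, B j * x0 j) + ∑ j, xbar i j = b i) ∧
      (∀ i j, l i j ≤ xbar i j ∧ xbar i j ≤ u i j) ∧
      (∑ j, w0 j * (x0 j : ℝ)) + ∑ i, ∑ j, w i j * (xbar i j : ℝ) ≥
        (∑ j, w0 j * (x0 j : ℝ)) + ∑ i, ∑ j, w i j * x i j) ∧
    sSup {r : ℝ | ∃ (z0 : Fin tB → ℤ) (z : Fin n → Fin tA → ℤ),
        (C.mulVec z0 + D.mulVec (fun j => ∑ i, z i j) = b0) ∧
        (∀ i, (∑ j, B j * z0 j) + ∑ j, z i j = b i) ∧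
        (∀ j, l0 j ≤ z0 j ∧ z0 j ≤ u0 j) ∧
        (∀ i j, l i j ≤ z i j ∧ z i j ≤ u i j) ∧
        r = (∑ j, w0 j * (z0 j : ℝ)) + ∑ i, ∑ j, w i j * (z i j : ℝ)} =
    sSup {r : ℝ | ∃ (z0 : Fin tB → ℤ) (yy : Fin tA → ℤ) (z : Fin n → Fin tA → ℝ),
        (∀ j, ∑ i, z i j = (yy j : ℝ)) ∧
        (C.mulVec z0 + D.mulVec yy = b0) ∧
        (∀ i, ((∑ j, B j * z0 j : ℤ) : ℝ) + ∑ j, z i j = (b i : ℝ)) ∧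
        (∀ j, l0 j ≤ z0 j ∧ z0 j ≤ u0 j) ∧
        (∀ i j, (l i j : ℝ) ≤ z i j ∧ z i j ≤ (u i j : ℝ)) ∧
        r = (∑ j, w0 j * (z0 j : ℝ)) + ∑ i, ∑ j, w i j * z i j} := by
  classical
  -- the general rounding principle for this block structure
  have main : ∀ (z0 : Fin tB → ℤ) (yy : Fin tA → ℤ) (z : Fin n → Fin tA → ℝ),
      (∀ j, ∑ i, z i j = (yy j : ℝ)) →
      (C.mulVec z0 + D.mulVec yy = b0) →
      (∀ i, ((∑ j, B j * z0 j : ℤ) : ℝ) + ∑ j, z i j = (b i : ℝ)) →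
      (∀ i j, (l i j : ℝ) ≤ z i j ∧ z i j ≤ (u i j : ℝ)) →
      ∃ zb : Fin n → Fin tA → ℤ,
        (∀ j, ∑ i, zb i j = yy j) ∧
        (C.mulVec z0 + D.mulVec (fun j => ∑ i, zb i j) = b0) ∧
        (∀ i, (∑ j, B j * z0 j) + ∑ j, zb i j = b i) ∧
        (∀ i j, l i j ≤ zb i j ∧ zb i j ≤ u i j) ∧
        (∑ i, ∑ j, w i j * z i j) ≤ ∑ i, ∑ j, w i j * (zb i j : ℝ) := by
    intro z0 yy z hs hcd hb hbx
    have hrowZ : ∀ i, ∃ m : ℤ, ∑ j, z i j = (m : ℝ) := by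
      intro i
      refine ⟨b i - ∑ j, B j * z0 j, ?_⟩
      have := hb i
      push_cast
      push_cast at this
      linarith
    have hcolZ : ∀ j, ∃ m : ℤ, ∑ i, z i j = (m : ℝ) := fun j => ⟨yy j, hs j⟩
    obtain ⟨zb, hr, hc, hbx', hobj⟩ :=
      rounding_lemma w l u
        ((Finset.univ.filter
          (fun p : Fin n × Fin tA => Int.fract (z p.1 p.2) ≠ 0)).card)
        z rfl hrowZ hcolZ hbx
    have hcolz : ∀ j, ∑ i, zb i j = yy j := by
      intro j
      have hcast : ((∑ i, zb i j : ℤ) : ℝ) = ((yy j : ℤ) : ℝ) := by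
        push_cast
        rw [hc j, hs j]
      exact_mod_cast hcast
    refine ⟨zb, hcolz, ?_, ?_, hbx', hobj⟩
    · have hfe : (fun j => ∑ i, zb i j) = yy := funext hcolz
      rw [hfe]
      exact hcd
    · intro i
      have hb' := hb i
      have hcast : ((∑ j, B j * z0 j + ∑ j, zb i j : ℤ) : ℝ) = ((b i : ℤ) : ℝ) := by
        push_cast
        push_cast at hb'
        rw [hr i]
        linarith
      exact_mod_cast hcast
  obtain ⟨xbar, hxb1, hxb2, hxb3, hxb4, hxb5⟩ := main x0 y x hsum hCD hB hbox
  refine ⟨⟨xbar, hxb1, hxb2, hxb3, hxb4, add_le_add_right hxb5 _⟩, ?_⟩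
  -- the sup statement
  have hsub : {r : ℝ | ∃ (z0 : Fin tB → ℤ) (z : Fin n → Fin tA → ℤ),
        (C.mulVec z0 + D.mulVec (fun j => ∑ i, z i j) = b0) ∧
        (∀ i, (∑ j, B j * z0 j) + ∑ j, z i j = b i) ∧
        (∀ j, l0 j ≤ z0 j ∧ z0 j ≤ u0 j) ∧
        (∀ i j, l i j ≤ z i j ∧ z i j ≤ u i j) ∧
        r = (∑ j, w0 j * (z0 j : ℝ)) + ∑ i, ∑ j, w i j * (z i j : ℝ)} ⊆
      {r : ℝ | ∃ (z0 : Fin tB → ℤ) (yy : Fin tA → ℤ) (z : Fin n → Fin tA → ℝ),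
        (∀ j, ∑ i, z i j = (yy j : ℝ)) ∧
        (C.mulVec z0 + D.mulVec yy = b0) ∧
        (∀ i, ((∑ j, B j * z0 j : ℤ) : ℝ) + ∑ j, z i j = (b i : ℝ)) ∧
        (∀ j, l0 j ≤ z0 j ∧ z0 j ≤ u0 j) ∧
        (∀ i j, (l i j : ℝ) ≤ z i j ∧ z i j ≤ (u i j : ℝ)) ∧
        r = (∑ j, w0 j * (z0 j : ℝ)) + ∑ i, ∑ j, w i j * z i j} := by
    rintro r ⟨z0, z, h1, h2, h3, h4, h5⟩
    refine ⟨z0, fun j => ∑ i, z i j, fun i j => (z i j : ℝ), ?_, h1, ?_, h3, ?_, h5⟩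
    · intro j; push_cast; rfl
    · intro i
      beta_reduce
      exact_mod_cast congrArg (fun m : ℤ => (m : ℝ)) (h2 i)
    · intro i j
      exact ⟨Int.cast_le.mpr (h4 i j).1, Int.cast_le.mpr (h4 i j).2⟩
  have hdom : ∀ r ∈ {r : ℝ | ∃ (z0 : Fin tB → ℤ) (yy : Fin tA → ℤ) (z : Fin n → Fin tA → ℝ),
        (∀ j, ∑ i, z i j = (yy j : ℝ)) ∧
        (C.mulVec z0 + D.mulVec yy = b0) ∧
        (∀ i, ((∑ j, B j * z0 j : ℤ) : ℝ) + ∑ j, z i j = (b i : ℝ)) ∧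
        (∀ j, l0 j ≤ z0 j ∧ z0 j ≤ u0 j) ∧
        (∀ i j, (l i j : ℝ) ≤ z i j ∧ z i j ≤ (u i j : ℝ)) ∧
        r = (∑ j, w0 j * (z0 j : ℝ)) + ∑ i, ∑ j, w i j * z i j},
      ∃ r' ∈ {r : ℝ | ∃ (z0 : Fin tB → ℤ) (z : Fin n → Fin tA → ℤ),
        (C.mulVec z0 + D.mulVec (fun j => ∑ i, z i j) = b0) ∧
        (∀ i, (∑ j, B j * z0 j) + ∑ j, z i j = b i) ∧
        (∀ j, l0 j ≤ z0 j ∧ z0 j ≤ u0 j) ∧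
        (∀ i j, l i j ≤ z i j ∧ z i j ≤ u i j) ∧
        r = (∑ j, w0 j * (z0 j : ℝ)) + ∑ i, ∑ j, w i j * (z i j : ℝ)}, r ≤ r' := by
    rintro r ⟨z0, yy, z, m1, m2, m3, m4, m5, m6⟩
    obtain ⟨zb, g1, g2, g3, g4, g5⟩ := main z0 yy z m1 m2 m3 m5
    refine ⟨(∑ j, w0 j * (z0 j : ℝ)) + ∑ i, ∑ j, w i j * (zb i j : ℝ),
      ⟨z0, zb, g2, g3, m4, g4, rfl⟩, ?_⟩
    rw [m6]
    exact add_le_add_right g5 _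
  set M : ℝ := (∑ j, |w0 j| * max |(l0 j : ℝ)| |(u0 j : ℝ)|) +
      ∑ i, ∑ j, |w i j| * max |(l i j : ℝ)| |(u i j : ℝ)| with hM
  have hbddmix : ∀ r ∈ {r : ℝ | ∃ (z0 : Fin tB → ℤ) (yy : Fin tA → ℤ) (z : Fin n → Fin tA → ℝ),
        (∀ j, ∑ i, z i j = (yy j : ℝ)) ∧
        (C.mulVec z0 + D.mulVec yy = b0) ∧
        (∀ i, ((∑ j, B j * z0 j : ℤ) : ℝ) + ∑ j, z i j = (b i : ℝ)) ∧
        (∀ j, l0 j ≤ z0 j ∧ z0 j ≤ u0 j) ∧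
        (∀ i j, (l i j : ℝ) ≤ z i j ∧ z i j ≤ (u i j : ℝ)) ∧
        r = (∑ j, w0 j * (z0 j : ℝ)) + ∑ i, ∑ j, w i j * z i j}, r ≤ M := by
    rintro r ⟨z0, yy, z, m1, m2, m3, m4, m5, m6⟩
    rw [m6, hM]
    refine add_le_add (Finset.sum_le_sum fun j _ => ?_)
      (Finset.sum_le_sum fun i _ => Finset.sum_le_sum fun j _ => ?_)
    · calc w0 j * (z0 j : ℝ) ≤ |w0 j * (z0 j : ℝ)| := le_abs_self _
        _ = |w0 j| * |(z0 j : ℝ)| := abs_mul _ _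
        _ ≤ |w0 j| * max |(l0 j : ℝ)| |(u0 j : ℝ)| := by
            refine mul_le_mul_of_nonneg_left ?_ (abs_nonneg _)
            exact abs_le_max_abs_abs (Int.cast_le.mpr (m4 j).1) (Int.cast_le.mpr (m4 j).2)
    · calc w i j * z i j ≤ |w i j * z i j| := le_abs_self _
        _ = |w i j| * |z i j| := abs_mul _ _
        _ ≤ |w i j| * max |(l i j : ℝ)| |(u i j : ℝ)| := by
            refine mul_le_mul_of_nonneg_left ?_ (abs_nonneg _)
            exact abs_le_max_abs_abs (m5 i j).1 (m5 i j).2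
  have hne2 : Set.Nonempty {r : ℝ | ∃ (z0 : Fin tB → ℤ) (yy : Fin tA → ℤ) (z : Fin n → Fin tA → ℝ),
        (∀ j, ∑ i, z i j = (yy j : ℝ)) ∧
        (C.mulVec z0 + D.mulVec yy = b0) ∧
        (∀ i, ((∑ j, B j * z0 j : ℤ) : ℝ) + ∑ j, z i j = (b i : ℝ)) ∧
        (∀ j, l0 j ≤ z0 j ∧ z0 j ≤ u0 j) ∧
        (∀ i j, (l i j : ℝ) ≤ z i j ∧ z i j ≤ (u i j : ℝ)) ∧
        r = (∑ j, w0 j * (z0 j : ℝ)) + ∑ i, ∑ j, w i j * z i j} :=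
    ⟨_, x0, y, x, hsum, hCD, hB, hbox0, hbox, rfl⟩
  have hne1 : Set.Nonempty {r : ℝ | ∃ (z0 : Fin tB → ℤ) (z : Fin n → Fin tA → ℤ),
        (C.mulVec z0 + D.mulVec (fun j => ∑ i, z i j) = b0) ∧
        (∀ i, (∑ j, B j * z0 j) + ∑ j, z i j = b i) ∧
        (∀ j, l0 j ≤ z0 j ∧ z0 j ≤ u0 j) ∧
        (∀ i j, l i j ≤ z i j ∧ z i j ≤ u i j) ∧
        r = (∑ j, w0 j * (z0 j : ℝ)) + ∑ i, ∑ j, w i j * (z i j : ℝ)} := by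
    obtain ⟨r, hr⟩ := hne2
    obtain ⟨r', hr', _⟩ := hdom r hr
    exact ⟨r', hr'⟩
  have hbdd2 : BddAbove {r : ℝ | ∃ (z0 : Fin tB → ℤ) (yy : Fin tA → ℤ) (z : Fin n → Fin tA → ℝ),
        (∀ j, ∑ i, z i j = (yy j : ℝ)) ∧
        (C.mulVec z0 + D.mulVec yy = b0) ∧
        (∀ i, ((∑ j, B j * z0 j : ℤ) : ℝ) + ∑ j, z i j = (b i : ℝ)) ∧
        (∀ j, l0 j ≤ z0 j ∧ z0 j ≤ u0 j) ∧
        (∀ i j, (l i j : ℝ) ≤ z i j ∧ z i j ≤ (u i j : ℝ)) ∧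
        r = (∑ j, w0 j * (z0 j : ℝ)) + ∑ i, ∑ j, w i j * z i j} := ⟨M, hbddmix⟩
  have hbdd1 : BddAbove {r : ℝ | ∃ (z0 : Fin tB → ℤ) (z : Fin n → Fin tA → ℤ),
        (C.mulVec z0 + D.mulVec (fun j => ∑ i, z i j) = b0) ∧
        (∀ i, (∑ j, B j * z0 j) + ∑ j, z i j = b i) ∧
        (∀ j, l0 j ≤ z0 j ∧ z0 j ≤ u0 j) ∧
        (∀ i j, l i j ≤ z i j ∧ z i j ≤ u i j) ∧
        r = (∑ j, w0 j * (z0 j : ℝ)) + ∑ i, ∑ j, w i j * (z i j : ℝ)} :=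
    ⟨M, fun r hr => hbddmix r (hsub hr)⟩
  apply le_antisymm
  · exact csSup_le_csSup hbdd2 hne1 hsub
  · refine csSup_le hne2 fun r hr => ?_
    obtain ⟨r', hr', hle⟩ := hdom r hr
    exact hle.trans (le_csSup hbdd1 hr')
end

section
/- Let θ ≥ 1 be an integer, let n ≥ 1, and let a₁, …, aₙ, b₁, …, bₙ be integers. Consider the map F defined on {0, 1, …, θ − 1} by F(ξ) = ((⌈(aᵢ − ξ)/θ⌉)_{i=1}^n, (⌊(bᵢ − ξ)/θ⌋)_{i=1}^n). Then F takes at most 2n + 1 distinct values, and {0, 1, …, θ − 1} can be partitioned into at most 2n + 1 integer intervals on each of which F is constant. -/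
private lemma myfloor (x θ : ℤ) (hθ : 0 < θ) : ⌊((x : ℤ) : ℚ) / ((θ : ℤ) : ℚ)⌋ = x / θ := by
  have h1 : ((θ : ℤ) : ℚ) = ((θ.toNat : ℕ) : ℚ) := by
    exact_mod_cast congrArg (Int.cast : ℤ → ℚ) (Int.toNat_of_nonneg hθ.le).symm
  rw [h1, Rat.floor_intCast_div_natCast, Int.toNat_of_nonneg hθ.le]

private lemma myceil (x θ : ℤ) (hθ : 0 < θ) : ⌈((x : ℤ) : ℚ) / ((θ : ℤ) : ℚ)⌉ = -((-x) / θ) := by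
  have : ⌊(((-x : ℤ)) : ℚ) / ((θ : ℤ) : ℚ)⌋ = (-x) / θ := myfloor (-x) θ hθ
  push_cast at this
  rw [neg_div, Int.floor_neg] at this
  omega

private lemma smalldiv (θ c x : ℤ) (hθ : 0 < θ) (hc : 0 ≤ c) (hc' : c < θ)
    (hx : 0 ≤ x) (hx' : x < θ) : (c - x) / θ = if x ≤ c then 0 else -1 := by
  split_ifs with h
  · exact Int.ediv_eq_zero_of_lt (by omega) (by omega)
  · have : c - x = (θ + c - x) + (-1) * θ := by ring
    rw [this, Int.add_mul_ediv_right _ _ (by omega : θ ≠ 0),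
      Int.ediv_eq_zero_of_lt (by omega) (by omega)]
    ring

private lemma floorval (θ b ξ : ℤ) (hθ : 0 < θ) (hξ : 0 ≤ ξ) (hξ' : ξ < θ) :
    ⌊((b - ξ : ℤ) : ℚ) / ((θ : ℤ) : ℚ)⌋ = b / θ + (if b % θ + 1 ≤ ξ then -1 else 0) := by
  rw [myfloor _ _ hθ]
  have hd : b - ξ = (b % θ - ξ) + (b / θ) * θ := by
    have := Int.emod_add_mul_ediv b θ; rw [mul_comm]; omega
  rw [hd, Int.add_mul_ediv_right _ _ (by omega : θ ≠ 0),
    smalldiv θ (b % θ) ξ hθ (Int.emod_nonneg b (by omega)) (Int.emod_lt_of_pos b hθ) hξ hξ']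
  have : (ξ ≤ b % θ) ↔ ¬ (b % θ + 1 ≤ ξ) := by omega
  split_ifs <;> omega

private lemma ceilval (θ a ξ : ℤ) (hθ : 0 < θ) (hξ : 0 ≤ ξ) (hξ' : ξ < θ) :
    ⌈((a - ξ : ℤ) : ℚ) / ((θ : ℤ) : ℚ)⌉ = a / θ + (if a % θ ≤ ξ then 0 else 1) := by
  rw [myceil _ _ hθ]
  have hd : -(a - ξ) = (ξ - a % θ) + (-(a / θ)) * θ := by
    have := Int.emod_add_mul_ediv a θ; rw [neg_mul, mul_comm]; omega
  rw [hd, Int.add_mul_ediv_right _ _ (by omega : θ ≠ 0),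
    smalldiv θ ξ (a % θ) hθ hξ hξ' (Int.emod_nonneg a (by omega)) (Int.emod_lt_of_pos a hθ)]
  split_ifs <;> omega

/-- The collection of all rounded bounds `(⌈(aᵢ − ξ)/θ⌉)ᵢ, (⌊(bᵢ − ξ)/θ⌋)ᵢ`
takes at most `2n + 1` distinct values as `ξ` ranges over `{0, …, θ − 1}`,
and this range can be partitioned into at most `2n + 1` integer intervals on
each of which all these bounds are constant. -/
theorem efficient_subintervals_count
    (θ : ℤ) (hθ : 1 ≤ θ) (n : ℕ) (hn : 1 ≤ n)
    (a b : Fin n → ℤ)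
    (F : ℤ → (Fin n → ℤ) × (Fin n → ℤ))
    (hF : ∀ ξ, F ξ =
      (fun i => ⌈((a i - ξ : ℤ) : ℚ) / ((θ : ℤ) : ℚ)⌉,
       fun i => ⌊((b i - ξ : ℤ) : ℚ) / ((θ : ℤ) : ℚ)⌋)) :
    (F '' (Set.Icc 0 (θ - 1))).ncard ≤ 2 * n + 1 ∧
    ∃ m : ℕ, m ≤ 2 * n + 1 ∧
      ∃ I : Fin m → Finset ℤ,
        (∀ k, ∃ lo hi : ℤ, I k = Finset.Icc lo hi) ∧
        (∀ k k', k ≠ k' → Disjoint (I k) (I k')) ∧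
        (Finset.univ.biUnion I = Finset.Icc 0 (θ - 1)) ∧
        (∀ k, ∀ ξ ∈ I k, ∀ ξ' ∈ I k, F ξ = F ξ') := by
  have hθ0 : 0 < θ := hθ
  -- breakpoint set
  set B : Finset ℤ :=
    (Finset.univ.image (fun i : Fin n => a i % θ)) ∪
    (Finset.univ.image (fun i : Fin n => b i % θ + 1)) with hB
  have hBcard : B.card ≤ 2 * n := by
    calc B.card ≤ (Finset.univ.image (fun i : Fin n => a i % θ)).card +
        (Finset.univ.image (fun i : Fin n => b i % θ + 1)).card := Finset.card_union_le _ _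
      _ ≤ n + n := by
          gcongr <;> exact (Finset.card_image_le).trans (by simp)
      _ = 2 * n := by ring
  set h : ℤ → ℕ := fun ξ => (B.filter (· ≤ ξ)).card with hh
  have hmono : ∀ ξ ξ', ξ ≤ ξ' → h ξ ≤ h ξ' := by
    intro ξ ξ' hle
    apply Finset.card_le_card
    intro c hc
    simp only [Finset.mem_filter] at hc ⊢
    exact ⟨hc.1, hc.2.trans hle⟩
  have hub : ∀ ξ, h ξ ≤ 2 * n :=
    fun ξ => (Finset.card_filter_le _ _).trans hBcard
  -- key: equal h-value forces equal F-value, for points in the range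
  have key : ∀ ξ ξ', 0 ≤ ξ → ξ ≤ θ - 1 → 0 ≤ ξ' → ξ' ≤ θ - 1 → h ξ = h ξ' → F ξ = F ξ' := by
    have main : ∀ ξ ξ', 0 ≤ ξ → ξ ≤ θ - 1 → 0 ≤ ξ' → ξ' ≤ θ - 1 → ξ ≤ ξ' →
        h ξ = h ξ' → F ξ = F ξ' := by
      intro ξ ξ' h1 h2 h3 h4 hle hcard
      have hsub : B.filter (· ≤ ξ) ⊆ B.filter (· ≤ ξ') := by
        intro c hc
        simp only [Finset.mem_filter] at hc ⊢
        exact ⟨hc.1, hc.2.trans hle⟩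
      have heqs : B.filter (· ≤ ξ) = B.filter (· ≤ ξ') :=
        Finset.eq_of_subset_of_card_le hsub (le_of_eq hcard.symm)
      have memiff : ∀ c ∈ B, ((c ≤ ξ) ↔ (c ≤ ξ')) := by
        intro c hc
        constructor
        · intro hcx
          have : c ∈ B.filter (· ≤ ξ') := heqs ▸ (Finset.mem_filter.2 ⟨hc, hcx⟩)
          exact (Finset.mem_filter.1 this).2
        · intro hcx
          have : c ∈ B.filter (· ≤ ξ) := heqs ▸ (Finset.mem_filter.2 ⟨hc, hcx⟩)
          exact (Finset.mem_filter.1 this).2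
      rw [hF, hF]
      refine Prod.ext ?_ ?_ <;> funext i <;> simp only
      · rw [ceilval θ (a i) ξ hθ0 h1 (by omega), ceilval θ (a i) ξ' hθ0 h3 (by omega)]
        have hmem : a i % θ ∈ B := Finset.mem_union_left _
          (Finset.mem_image.2 ⟨i, Finset.mem_univ i, rfl⟩)
        have := memiff _ hmem
        split_ifs <;> omega
      · rw [floorval θ (b i) ξ hθ0 h1 (by omega), floorval θ (b i) ξ' hθ0 h3 (by omega)]
        have hmem : b i % θ + 1 ∈ B := Finset.mem_union_right _
          (Finset.mem_image.2 ⟨i, Finset.mem_univ i, rfl⟩)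
        have := memiff _ hmem
        split_ifs <;> omega
    intro ξ ξ' h1 h2 h3 h4 hcard
    rcases le_total ξ ξ' with hle | hle
    · exact main ξ ξ' h1 h2 h3 h4 hle hcard
    · exact (main ξ' ξ h3 h4 h1 h2 hle hcard.symm).symm
  -- the intervals
  set I : Fin (2 * n + 1) → Finset ℤ :=
    fun k => (Finset.Icc 0 (θ - 1)).filter (fun ξ => h ξ = (k : ℕ)) with hI
  have hIcc : ∀ k, ∃ lo hi : ℤ, I k = Finset.Icc lo hi := by
    intro k
    by_cases hne : (I k).Nonempty
    · refine ⟨(I k).min' hne, (I k).max' hne, ?_⟩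
      ext y
      simp only [Finset.mem_Icc]
      constructor
      · intro hy
        exact ⟨Finset.min'_le _ _ hy, Finset.le_max' _ _ hy⟩
      · rintro ⟨hy1, hy2⟩
        have hmin := Finset.mem_filter.1 ((I k).min'_mem hne)
        have hmax := Finset.mem_filter.1 ((I k).max'_mem hne)
        have gmin := Finset.mem_Icc.1 hmin.1
        have gmax := Finset.mem_Icc.1 hmax.1
        have l1 := hmono _ _ hy1
        have l2 := hmono _ _ hy2
        refine Finset.mem_filter.2 ⟨Finset.mem_Icc.2 ⟨gmin.1.trans hy1, hy2.trans gmax.2⟩, ?_⟩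
        have e1 := hmin.2
        have e2 := hmax.2
        omega
    · exact ⟨1, 0, by
        rw [Finset.not_nonempty_iff_eq_empty.1 hne, Finset.Icc_eq_empty (by omega)]⟩
  have hdisj : ∀ k k', k ≠ k' → Disjoint (I k) (I k') := by
    intro k k' hkk'
    rw [Finset.disjoint_left]
    intro ξ h1 h2
    simp only [hI, Finset.mem_filter] at h1 h2
    exact hkk' (Fin.ext (h1.2 ▸ h2.2 ▸ rfl))
  have hunion : Finset.univ.biUnion I = Finset.Icc 0 (θ - 1) := by
    ext ξ
    simp only [Finset.mem_biUnion, Finset.mem_univ, true_and, hI, Finset.mem_filter]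
    constructor
    · rintro ⟨k, hk, _⟩; exact hk
    · intro hξ
      exact ⟨⟨h ξ, by have := hub ξ; omega⟩, hξ, rfl⟩
  have hconst : ∀ k, ∀ ξ ∈ I k, ∀ ξ' ∈ I k, F ξ = F ξ' := by
    intro k ξ hξ ξ' hξ'
    simp only [hI, Finset.mem_filter, Finset.mem_Icc] at hξ hξ'
    exact key ξ ξ' hξ.1.1 hξ.1.2 hξ'.1.1 hξ'.1.2 (hξ.2.trans hξ'.2.symm)
  refine ⟨?_, 2 * n + 1, le_refl _, I, hIcc, hdisj, hunion, hconst⟩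
  -- cardinality bound
  have hset : F '' (Set.Icc 0 (θ - 1)) = ↑((Finset.Icc (0:ℤ) (θ - 1)).image F) := by
    rw [Finset.coe_image, Finset.coe_Icc]
  rw [hset, Set.ncard_coe_finset]
  calc ((Finset.Icc (0:ℤ) (θ - 1)).image F).card
      = ((Finset.univ.biUnion I).image F).card := by rw [hunion]
    _ = (Finset.univ.biUnion (fun k => (I k).image F)).card := by
        rw [Finset.biUnion_image]
    _ ≤ ∑ k : Fin (2 * n + 1), ((I k).image F).card := Finset.card_biUnion_le
    _ ≤ ∑ _k : Fin (2 * n + 1), 1 := by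
        apply Finset.sum_le_sum
        intro k _
        apply Finset.card_le_one.2
        intro x hx y hy
        obtain ⟨ξ, hξ, rfl⟩ := Finset.mem_image.1 hx
        obtain ⟨ξ', hξ', rfl⟩ := Finset.mem_image.1 hy
        exact hconst k ξ hξ ξ' hξ'
    _ = 2 * n + 1 := by simp
end

section
/- Let n ≥ 1, 0 ≤ k ≤ n − 1, let Δ ≥ 1 be an integer, and let β₁, …, βₙ be integers with 0 ≤ βᵢ ≤ Δ. Then there exist nonnegative integers xⁱⱼ (for 1 ≤ i ≤ n, j ∈ {1,2,3}) satisfying xⁱ₁ ≤ βᵢ, xⁱ₂ ≤ Δ − βᵢ, xⁱ₃ ≤ 1, the load constraints 1·xⁱ₁ + 1·xⁱ₂ + Δ·xⁱ₃ ≤ Δ for every i, and the demand constraints ∑_{i=1}^n xⁱ₁ = Δ, ∑_{i=1}^n xⁱ₂ = (n − k − 1)·Δ, ∑_{i=1}^n xⁱ₃ = k, if and only if there exists a subset S ⊆ {1, …, n} with |S| = k and ∑_{i∉S} βᵢ = Δ. -/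
/-- Correctness of the scheduling interpretation of the hardness reduction:
all jobs can be scheduled with makespan at most `Δ` iff there is a set `S` of
`k` machines receiving the type-3 jobs such that the capacities `βᵢ` of the
remaining machines for type-1 jobs sum to exactly `Δ`. -/
theorem scheduling_reduction_correctness
    (n k : ℕ) (hn : 1 ≤ n) (hk : k ≤ n - 1)
    (Δ : ℤ) (hΔ : 1 ≤ Δ)
    (β : Fin n → ℤ) (hβ : ∀ i, 0 ≤ β i ∧ β i ≤ Δ) :
    (∃ x1 x2 x3 : Fin n → ℤ,
      (∀ i, 0 ≤ x1 i ∧ 0 ≤ x2 i ∧ 0 ≤ x3 i) ∧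
      (∀ i, x1 i ≤ β i) ∧
      (∀ i, x2 i ≤ Δ - β i) ∧
      (∀ i, x3 i ≤ 1) ∧
      (∀ i, 1 * x1 i + 1 * x2 i + Δ * x3 i ≤ Δ) ∧
      (∑ i, x1 i = Δ) ∧
      (∑ i, x2 i = ((n : ℤ) - (k : ℤ) - 1) * Δ) ∧
      (∑ i, x3 i = (k : ℤ))) ↔
    ∃ S : Finset (Fin n), S.card = k ∧ ∑ i ∈ Sᶜ, β i = Δ := by
  have hkn : k ≤ n := le_trans hk (Nat.sub_le n 1)
  constructor
  · rintro ⟨x1, x2, x3, hpos, h1, h2, h3, hload, s1, s2, s3⟩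
    set S : Finset (Fin n) := Finset.univ.filter (fun i => x3 i = 1) with hS
    have hmem : ∀ i, i ∈ S ↔ x3 i = 1 := fun i => by simp [hS]
    have hx3S : ∀ i ∈ S, x3 i = 1 := fun i hi => (hmem i).1 hi
    have hx3C : ∀ i ∈ Sᶜ, x3 i = 0 := by
      intro i hi
      have h0 := (hpos i).2.2
      have h1' := h3 i
      have : ¬ x3 i = 1 := fun h => (Finset.mem_compl.1 hi) ((hmem i).2 h)
      omega
    -- x1, x2 vanish on S
    have hx1S : ∀ i ∈ S, x1 i = 0 := by
      intro i hi
      have := hload i; rw [hx3S i hi] at this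
      have := (hpos i).1; have := (hpos i).2.1; linarith
    have hx2S : ∀ i ∈ S, x2 i = 0 := by
      intro i hi
      have := hload i; rw [hx3S i hi] at this
      have := (hpos i).1; have := (hpos i).2.1; linarith
    have hsplit3 := Finset.sum_add_sum_compl S x3
    rw [s3, Finset.sum_congr rfl hx3S, Finset.sum_congr rfl hx3C] at hsplit3
    simp at hsplit3
    have hcard : S.card = k := by exact_mod_cast hsplit3
    have hcardC : (Sᶜ.card : ℤ) = (n : ℤ) - k := by
      rw [Finset.card_compl, hcard, Fintype.card_fin]
      push_cast [hkn]; ring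
    -- sums of x1, x2 over complement
    have hsum1 : ∑ i ∈ Sᶜ, x1 i = Δ := by
      have := Finset.sum_add_sum_compl S x1
      rw [s1, Finset.sum_congr rfl hx1S] at this
      simpa using this
    have hsum2 : ∑ i ∈ Sᶜ, x2 i = ((n : ℤ) - (k : ℤ) - 1) * Δ := by
      have := Finset.sum_add_sum_compl S x2
      rw [s2, Finset.sum_congr rfl hx2S] at this
      simpa using this
    -- each i in Sᶜ has x1 i + x2 i = Δ
    have hzero : ∀ i ∈ Sᶜ, Δ - x1 i - x2 i = 0 := by
      have hsum0 : ∑ i ∈ Sᶜ, (Δ - x1 i - x2 i) = 0 := by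
        rw [Finset.sum_sub_distrib, Finset.sum_sub_distrib, Finset.sum_const,
          hsum1, hsum2]
        rw [nsmul_eq_mul, hcardC]; ring
      intro i hi
      refine (Finset.sum_eq_zero_iff_of_nonneg ?_).1 hsum0 i hi
      intro j hj
      have := hload j; rw [hx3C j hj] at this; linarith
    have hx1C : ∀ i ∈ Sᶜ, x1 i = β i := by
      intro i hi
      have hz := hzero i hi
      have := h1 i; have := h2 i; linarith
    refine ⟨S, hcard, ?_⟩
    rw [← Finset.sum_congr rfl hx1C, hsum1]
  · rintro ⟨S, hScard, hSsum⟩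
    refine ⟨fun i => if i ∈ S then 0 else β i,
            fun i => if i ∈ S then 0 else Δ - β i,
            fun i => if i ∈ S then 1 else 0, ?_, ?_, ?_, ?_, ?_, ?_, ?_, ?_⟩
    · intro i; obtain ⟨h0, h1⟩ := hβ i
      by_cases h : i ∈ S <;> simp [h] <;> omega
    · intro i; obtain ⟨h0, h1⟩ := hβ i
      by_cases h : i ∈ S <;> simp [h, h0]
    · intro i; obtain ⟨h0, h1⟩ := hβ i
      by_cases h : i ∈ S <;> simp [h] <;> omega
    · intro i; by_cases h : i ∈ S <;> simp [h]
    · intro i; by_cases h : i ∈ S <;> simp [h] <;> linarith [(hβ i).1]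
    · rw [← Finset.sum_add_sum_compl S]
      rw [Finset.sum_congr rfl (fun i hi => if_pos hi),
        Finset.sum_congr rfl (fun i (hi : i ∈ Sᶜ) => if_neg (Finset.mem_compl.1 hi))]
      simpa using hSsum
    · rw [← Finset.sum_add_sum_compl S]
      rw [Finset.sum_congr rfl (fun i hi => if_pos hi),
        Finset.sum_congr rfl (fun i (hi : i ∈ Sᶜ) => if_neg (Finset.mem_compl.1 hi))]
      rw [Finset.sum_sub_distrib, hSsum, Finset.sum_const, Finset.sum_const,
        Finset.card_compl, hScard, Fintype.card_fin]
      have hc : ((n - k : ℕ) : ℤ) = (n : ℤ) - k := by omega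
      simp only [nsmul_eq_mul, hc]
      ring
    · rw [← Finset.sum_add_sum_compl S]
      rw [Finset.sum_congr rfl (fun i hi => if_pos hi),
        Finset.sum_congr rfl (fun i (hi : i ∈ Sᶜ) => if_neg (Finset.mem_compl.1 hi))]
      simp [hScard]
end
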